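/- If every partition in a category of partitions D that is noncrossing has an even number of total legs, then every partition in D has an even number of total legs. -/
import Mathlib


/-- A partition between `k` upper and `l` lower points, viewed as the
equivalence relation (setoid) on the points whose classes are the blocks. -/
abbrev PartitionKL (k l : ℕ) := Setoid (Fin k ⊕ Fin l)

/-- Placing two partitions side by side (disjoint union). -/
def sideBySide {α β : Type*} (p : Setoid α) (q : Setoid β) : Setoid (α ⊕ β) where
  r x y := match x, y with
    | .inl a, .inl b => p a b
    | .inr a, .inr b => q a b
    | _, _ => False
  iseqv := by
    constructor
    · rintro (a | a)
      · exact p.refl a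
      · exact q.refl a
    · rintro (a | a) (b | b) h
      · exact p.symm h
      · exact h.elim
      · exact h.elim
      · exact q.symm h
    · rintro (a | a) (b | b) (c | c) h1 h2 <;> first
        | exact h1.elim | exact h2.elim
        | exact p.trans h1 h2 | exact q.trans h1 h2

/-- Horizontal concatenation (tensor product) of partitions. -/
def tensorPart {k l k' l' : ℕ} (p : PartitionKL k l) (q : PartitionKL k' l') :
    PartitionKL (k + k') (l + l') :=
  Setoid.comap (fun x => match x with
    | .inl i => match finSumFinEquiv.symm i with
      | .inl a => Sum.inl (Sum.inl a)
      | .inr a => Sum.inr (Sum.inl a)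
    | .inr j => match finSumFinEquiv.symm j with
      | .inl b => Sum.inl (Sum.inr b)
      | .inr b => Sum.inr (Sum.inr b))
    (sideBySide p q)

/-- Vertical concatenation (composition) of partitions: place `p ∈ P(k,l)` on
top of `q ∈ P(l,m)`, join blocks across the middle `l` points, and restrict to
the outer `k + m` points (closed middle components disappear). -/
def compPart {k l m : ℕ} (p : PartitionKL k l) (q : PartitionKL l m) :
    PartitionKL k m :=
  Setoid.comap (Sum.map id Sum.inr)
    (Relation.EqvGen.setoid (fun x y : Fin k ⊕ (Fin l ⊕ Fin m) => match x, y with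
      | .inl a, .inl b => p (.inl a) (.inl b)
      | .inl a, .inr (.inl b) => p (.inl a) (.inr b)
      | .inr (.inl a), .inl b => p (.inr a) (.inl b)
      | .inr (.inl a), .inr (.inl b) => p (.inr a) (.inr b) ∨ q (.inl a) (.inl b)
      | .inr (.inl a), .inr (.inr b) => q (.inl a) (.inr b)
      | .inr (.inr a), .inr (.inl b) => q (.inr a) (.inl b)
      | .inr (.inr a), .inr (.inr b) => q (.inr a) (.inr b)
      | _, _ => False))

/-- Upside-down turning of a partition. -/
def flipPart {k l : ℕ} (p : PartitionKL k l) : PartitionKL l k :=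
  Setoid.comap Sum.swap p

/-- A category of partitions: a collection `D(k,l) ⊆ P(k,l)` closed under
horizontal and vertical concatenation and upside-down turning, and containing
the identity pairing and the semicircle `∩ ∈ P(0,2)`. -/
structure PartitionCategory where
  mem : ∀ k l : ℕ, Set (PartitionKL k l)
  tensor_mem : ∀ {k l k' l'} {p : PartitionKL k l} {q : PartitionKL k' l'},
    p ∈ mem k l → q ∈ mem k' l' → tensorPart p q ∈ mem (k + k') (l + l')
  comp_mem : ∀ {k l m} {p : PartitionKL k l} {q : PartitionKL l m},
    p ∈ mem k l → q ∈ mem l m → compPart p q ∈ mem k m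
  flip_mem : ∀ {k l} {p : PartitionKL k l}, p ∈ mem k l → flipPart p ∈ mem l k
  id_mem : (⊤ : PartitionKL 1 1) ∈ mem 1 1
  semicircle_mem : (⊤ : PartitionKL 0 2) ∈ mem 0 2

/-- The position of a point when the `k + l` points are traversed
counterclockwise starting from bottom left. -/
def ord {k l : ℕ} : Fin k ⊕ Fin l → ℕ
  | .inl i => l + (k - 1 - i.val)
  | .inr j => j.val

/-- A partition is noncrossing when its strings can be drawn without
crossings. -/
def NoncrossingKL {k l : ℕ} (p : PartitionKL k l) : Prop :=
  ∀ a b c d : Fin k ⊕ Fin l, ord a < ord b → ord b < ord c → ord c < ord d →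
    p a c → p b d → p a b

/-- Partitions with at most one point are vacuously noncrossing. -/
lemma noncrossing_of_le_one {k l : ℕ} (hkl : k + l ≤ 1) (p : PartitionKL k l) :
    NoncrossingKL p := by
  intro a b c d h1 _ _ _ _
  exfalso
  have hab : ord a = ord b := by
    rcases a with a | a <;> rcases b with b | b
    · have := a.isLt; have := b.isLt; simp only [ord]; omega
    · have := a.isLt; have := b.isLt; omega
    · have := a.isLt; have := b.isLt; omega
    · have := a.isLt; have := b.isLt; simp only [ord]; omega
  omega

/-- Every category of partitions contains some partition in `P(m, m)`. -/
lemma exists_mem_diag (C : PartitionCategory) :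
    ∀ m, ∃ p : PartitionKL m m, p ∈ C.mem m m
  | 0 => ⟨_, C.comp_mem C.semicircle_mem (C.flip_mem C.semicircle_mem)⟩
  | (m + 1) => by
      obtain ⟨p, hp⟩ := exists_mem_diag C m
      exact ⟨_, C.tensor_mem hp C.id_mem⟩

/-- Every category of partitions contains some partition in `P(m+2, m)`. -/
lemma exists_mem_cap (C : PartitionCategory) (m : ℕ) :
    ∃ q : PartitionKL (m + 2) m, q ∈ C.mem (m + 2) m := by
  obtain ⟨p, hp⟩ := exists_mem_diag C m
  exact ⟨_, C.tensor_mem hp (C.flip_mem C.semicircle_mem)⟩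

/-- If every noncrossing partition in a category of partitions has an even
total number of legs, then every partition in the category has an even total
number of legs. -/
theorem even_of_noncrossing_even (C : PartitionCategory)
    (h : ∀ k l, ∀ p ∈ C.mem k l, NoncrossingKL p → Even (k + l)) :
    ∀ k l, ∀ p ∈ C.mem k l, Even (k + l) := by
  suffices H : ∀ n k l, k + l = n → ∀ p ∈ C.mem k l, Even (k + l) by
    intro k l p hp; exact H (k + l) k l rfl p hp
  intro n
  induction n using Nat.strong_induction_on with
  | _ n ih =>
    intro k l hn p hp
    rcases le_or_gt (k + l) 1 with hle | hgt
    · exact h k l p hp (noncrossing_of_le_one hle p)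
    · rcases Nat.lt_or_ge l 2 with hl | hl
      · -- l ≤ 1, so k ≥ 1; if k ≥ 2 cap the top, else k = 1, l = 1 (even)
        rcases Nat.lt_or_ge k 2 with hk | hk
        · -- k = 1, l = 1
          have : k = 1 ∧ l = 1 := by omega
          obtain ⟨rfl, rfl⟩ := this
          exact ⟨1, rfl⟩
        · obtain ⟨k', rfl⟩ : ∃ k', k = k' + 2 := ⟨k - 2, by omega⟩
          obtain ⟨q, hq⟩ := exists_mem_cap C k'
          have hq' : flipPart q ∈ C.mem k' (k' + 2) := C.flip_mem hq
          have hcomp := C.comp_mem hq' hp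
          have hev : Even (k' + l) := ih (k' + l) (by omega) k' l rfl _ hcomp
          rw [Nat.even_iff] at hev ⊢
          omega
      · obtain ⟨l', rfl⟩ : ∃ l', l = l' + 2 := ⟨l - 2, by omega⟩
        obtain ⟨q, hq⟩ := exists_mem_cap C l'
        have hcomp := C.comp_mem hp hq
        have hev : Even (k + l') := ih (k + l') (by omega) k l' rfl _ hcomp
        rw [Nat.even_iff] at hev ⊢
        omega
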